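/- Let ω_j = |j|^{2s} for j ≠ 0, ω_0 = 1, γ_j = |j|^{2p} for j ≠ 0 (γ_0 = 1), α_j = |j|^{-2a} for j ≠ 0 (α_0 = 1), with p ≥ s ≥ 0 and a > 1/2. Then with Ψ_n = min_{k≥0} max{ ω_k/γ_k, Σ_{0≤|j|≤k} ω_j/(n α_j) }, there exist constants 0 < c ≤ C such that c·n^{-2(p-s)/(2p+2a+1)} ≤ Ψ_n ≤ C·n^{-2(p-s)/(2p+2a+1)} for all n ≥ 1. -/

import Mathlib

open Real

set_option maxHeartbeats 800000 in
/-- Rate in `n` for the (pol)-(pol) scenario: `Ψ_n ≍ n^{-2(p-s)/(2p+2a+1)}`. -/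
theorem rate_psi_pol_pol
    (s p a : ℝ) (hs : 0 ≤ s) (hps : s ≤ p) (ha : 1 / 2 < a)
    (ω γ α : ℤ → ℝ)
    (hω : ∀ j : ℤ, ω j = if j = 0 then 1 else |(j : ℝ)| ^ (2 * s))
    (hγ : ∀ j : ℤ, γ j = if j = 0 then 1 else |(j : ℝ)| ^ (2 * p))
    (hα : ∀ j : ℤ, α j = if j = 0 then 1 else |(j : ℝ)| ^ (-(2 * a)))
    (Ψ : ℕ → ℝ)
    (hΨ : ∀ n : ℕ, Ψ n = ⨅ k : ℕ, max (ω k / γ k)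
      (∑ j ∈ Finset.Icc (-(k : ℤ)) k, ω j / (n * α j))) :
    ∃ c C : ℝ, 0 < c ∧ c ≤ C ∧ ∀ n : ℕ, 1 ≤ n →
      c * (n : ℝ) ^ (-(2 * (p - s) / (2 * p + 2 * a + 1))) ≤ Ψ n ∧
        Ψ n ≤ C * (n : ℝ) ^ (-(2 * (p - s) / (2 * p + 2 * a + 1))) := by
  have hD : (0:ℝ) < 2 * p + 2 * a + 1 := by linarith
  set D := 2 * p + 2 * a + 1 with hDdef
  set q := 2 * s + 2 * a with hqdef
  have hq0 : (0:ℝ) ≤ q := by simp only [hqdef]; linarith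
  have hq1 : (0:ℝ) < q + 1 := by linarith
  have hrD : (q + 1) / D - 1 = -(2 * (p - s) / D) := by
    field_simp
    ring
  set r := 2 * (p - s) / D with hrdef
  have hr0 : 0 ≤ r := div_nonneg (by linarith) hD.le
  have habs : ∀ j : ℤ, j ≠ 0 → (0:ℝ) < |(j : ℝ)| := fun j hj =>
    abs_pos.mpr (Int.cast_ne_zero.mpr hj)
  refine ⟨2 ^ (-(q+1)), 3 * 2 ^ (q+1), by positivity, ?_, ?_⟩
  · have h1 : (2:ℝ) ^ (-(q+1)) ≤ 1 :=
      Real.rpow_le_one_of_one_le_of_nonpos one_le_two (by linarith)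
    have h2 : (1:ℝ) ≤ 2 ^ (q+1) := Real.one_le_rpow one_le_two hq1.le
    nlinarith
  intro n hn
  have ht : (1:ℝ) ≤ (n:ℝ) := by exact_mod_cast hn
  have ht0 : (0:ℝ) < (n:ℝ) := by linarith
  have hx0 : (0:ℝ) < (n:ℝ) ^ (1/D) := Real.rpow_pos_of_pos ht0 _
  have hx1 : (1:ℝ) ≤ (n:ℝ) ^ (1/D) := Real.one_le_rpow ht (by positivity)
  have hxr : ((n:ℝ) ^ (1/D)) ^ (q+1) = (n:ℝ) ^ ((q+1)/D) := by
    rw [← Real.rpow_mul ht0.le]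
    congr 1
    field_simp
  have hxn : (n:ℝ) ^ ((q+1)/D) / n = (n:ℝ) ^ (-r) := by
    nth_rewrite 2 [show (n:ℝ) = (n:ℝ) ^ (1:ℝ) from (Real.rpow_one _).symm]
    rw [← Real.rpow_sub ht0, hrD]
  have hterm : ∀ j : ℤ, j ≠ 0 → ω j / (n * α j) = |(j:ℝ)| ^ q / n := by
    intro j hj
    rw [hω, hα, if_neg hj, if_neg hj, Real.rpow_neg (abs_nonneg _), hqdef,
      Real.rpow_add (habs j hj)]
    rw [div_eq_div_iff (by positivity) ht0.ne']
    have h1 : (0:ℝ) < |(j:ℝ)| ^ (2*a) := Real.rpow_pos_of_pos (habs j hj) _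
    field_simp
  have hterm0 : ω 0 / (n * α 0) = 1 / n := by
    rw [hω, hα]; simp
  have hB : ∀ k : ℕ, k ≠ 0 → ω (k:ℤ) / γ (k:ℤ) = (k:ℝ) ^ (-(2*(p-s))) := by
    intro k hk
    have hk' : ((k:ℤ)) ≠ 0 := Int.natCast_ne_zero.mpr hk
    have hkR : (0:ℝ) < (k:ℝ) := by exact_mod_cast Nat.pos_of_ne_zero hk
    rw [hω, hγ, if_neg hk', if_neg hk']
    push_cast
    rw [abs_of_nonneg hkR.le, ← Real.rpow_sub hkR]
    ring_nf
  have hxpow : ((n:ℝ) ^ (1/D)) ^ (-(2*(p-s))) = (n:ℝ) ^ (-r) := by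
    rw [← Real.rpow_mul ht0.le]
    congr 1
    rw [hrdef]
    field_simp
  have hbdd : BddBelow (Set.range fun k : ℕ => max (ω k / γ k)
      (∑ j ∈ Finset.Icc (-(k : ℤ)) k, ω j / (n * α j))) := by
    refine ⟨0, ?_⟩
    rintro x ⟨k, rfl⟩
    refine le_trans ?_ (le_max_right _ _)
    apply Finset.sum_nonneg
    intro j _
    rcases eq_or_ne j 0 with h | h
    · rw [h, hterm0]; positivity
    · rw [hterm j h]; positivity
  constructor
  · -- lower bound
    rw [hΨ]
    apply le_ciInf
    intro k
    rcases Nat.eq_zero_or_pos k with hk0 | hk1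
    · subst hk0
      refine le_trans ?_ (le_max_left _ _)
      have h0 : ω ((0:ℕ):ℤ) / γ ((0:ℕ):ℤ) = 1 := by
        rw [hω, hγ]; norm_num
      rw [h0]
      calc (2:ℝ) ^ (-(q+1)) * (n:ℝ) ^ (-r) ≤ 1 * 1 :=
            mul_le_mul (Real.rpow_le_one_of_one_le_of_nonpos one_le_two (by linarith))
              (Real.rpow_le_one_of_one_le_of_nonpos ht (by linarith))
              (by positivity) (by norm_num)
        _ = 1 := by ring
    · have hkR : (0:ℝ) < (k:ℝ) := by exact_mod_cast hk1
      by_cases hc : (k:ℝ) ≤ (n:ℝ) ^ (1/D)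
      · refine le_trans ?_ (le_max_left _ _)
        rw [hB k hk1.ne']
        have h1 : ((n:ℝ) ^ (1/D)) ^ (-(2*(p-s))) ≤ (k:ℝ) ^ (-(2*(p-s))) :=
          Real.rpow_le_rpow_of_nonpos hkR hc (by linarith)
        rw [hxpow] at h1
        calc (2:ℝ) ^ (-(q+1)) * (n:ℝ) ^ (-r) ≤ 1 * (n:ℝ) ^ (-r) := by
              apply mul_le_mul_of_nonneg_right
                (Real.rpow_le_one_of_one_le_of_nonpos one_le_two (by linarith))
                (by positivity)
          _ = (n:ℝ) ^ (-r) := by ring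
          _ ≤ (k:ℝ) ^ (-(2*(p-s))) := h1
      · push_neg at hc
        refine le_trans ?_ (le_max_right _ _)
        set m : ℕ := (k+1)/2 with hm
        have hm1 : 1 ≤ m := Nat.one_le_div_iff (by norm_num) |>.mpr (by omega)
        have hmk : m ≤ k := by omega
        have hmR : (k:ℝ)/2 ≤ (m:ℝ) := by
          have h2 : k ≤ 2 * m := by omega
          have h3 : (k:ℝ) ≤ 2 * (m:ℝ) := by exact_mod_cast h2
          linarith
        have hsub : Finset.Icc (m:ℤ) (k:ℤ) ⊆ Finset.Icc (-(k:ℤ)) (k:ℤ) :=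
          Finset.Icc_subset_Icc (by omega) le_rfl
        have hlow : ∀ j ∈ Finset.Icc (m:ℤ) (k:ℤ),
            ((k:ℝ)/2) ^ q / n ≤ ω j / (n * α j) := by
          intro j hj
          rw [Finset.mem_Icc] at hj
          have hj0 : j ≠ 0 := by omega
          rw [hterm j hj0]
          gcongr
          have hjm : (m:ℝ) ≤ (j:ℝ) := by exact_mod_cast hj.1
          have hjpos : (0:ℝ) < (j:ℝ) := by
            have : (0:ℤ) < j := by omega
            exact_mod_cast this
          rw [abs_of_pos hjpos]
          linarith
        have hcard : ((Finset.Icc (m:ℤ) (k:ℤ)).card : ℝ) = (k:ℝ) - m + 1 := by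
          rw [Int.card_Icc]
          have : ((k:ℤ) + 1 - (m:ℤ)).toNat = k + 1 - m := by omega
          rw [this]
          push_cast [Nat.cast_sub (by omega : m ≤ k + 1)]
          ring
        have hsum1 : (Finset.Icc (m:ℤ) (k:ℤ)).card • (((k:ℝ)/2) ^ q / n) ≤
            ∑ j ∈ Finset.Icc (m:ℤ) (k:ℤ), ω j / (n * α j) :=
          Finset.card_nsmul_le_sum _ _ _ hlow
        have hsum2 : ∑ j ∈ Finset.Icc (m:ℤ) (k:ℤ), ω j / (n * α j) ≤
            ∑ j ∈ Finset.Icc (-(k:ℤ)) (k:ℤ), ω j / (n * α j) := by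
          apply Finset.sum_le_sum_of_subset_of_nonneg hsub
          intro j _ _
          rcases eq_or_ne j 0 with h | h
          · rw [h, hterm0]; positivity
          · rw [hterm j h]; positivity
        rw [nsmul_eq_mul, hcard] at hsum1
        refine le_trans ?_ (hsum1.trans hsum2)
        have hck : (n:ℝ) ^ (1/D) ≤ (k:ℝ) := hc.le
        have hkq : (n:ℝ) ^ ((q+1)/D) ≤ ((k:ℝ)/2) ^ (q+1) * 2 ^ (q+1) := by
          rw [← hxr]
          have hdr : ((k:ℝ)/2) ^ (q+1) * 2 ^ (q+1) = (k:ℝ) ^ (q+1) := by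
            rw [← Real.mul_rpow (by positivity) (by positivity)]
            norm_num
          rw [hdr]
          exact Real.rpow_le_rpow (by positivity) hck hq1.le
        have hsplit : ((k:ℝ)/2) ^ (q+1) = ((k:ℝ)/2) ^ q * ((k:ℝ)/2) := by
          rw [← Real.rpow_add_one (by positivity)]
        have h2q : (0:ℝ) < (2:ℝ) ^ (q+1) := by positivity
        have hmain : (2:ℝ) ^ (-(q+1)) * (n:ℝ) ^ ((q+1)/D) ≤ ((k:ℝ)/2) ^ (q+1) := by
          rw [Real.rpow_neg (by norm_num : (0:ℝ) ≤ 2), inv_mul_le_iff₀ h2q]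
          calc (n:ℝ) ^ ((q+1)/D) ≤ ((k:ℝ)/2) ^ (q+1) * 2 ^ (q+1) := hkq
            _ = 2 ^ (q+1) * ((k:ℝ)/2) ^ (q+1) := by ring
        have hfin : (2:ℝ) ^ (-(q+1)) * (n:ℝ) ^ (-r) ≤ ((k:ℝ)/2) ^ (q+1) / n := by
          rw [← hxn, ← mul_div_assoc]
          gcongr
        refine hfin.trans ?_
        have hmR2 : (m:ℝ) ≤ ((k:ℝ)+1)/2 := by
          have h2 : 2 * m ≤ k + 1 := by omega
          have h3 : (2:ℝ) * (m:ℝ) ≤ (k:ℝ) + 1 := by exact_mod_cast h2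
          linarith
        have h1 : ((k:ℝ)/2) ≤ (k:ℝ) - (m:ℝ) + 1 := by linarith
        have h2 : (0:ℝ) ≤ ((k:ℝ)/2) ^ q := by positivity
        calc ((k:ℝ)/2) ^ (q+1) / n = ((k:ℝ)/2) ^ q * ((k:ℝ)/2) / n := by rw [hsplit]
          _ ≤ (((k:ℝ) - (m:ℝ) + 1) * ((k:ℝ)/2) ^ q) / n := by
              rw [div_le_div_iff_of_pos_right ht0]
              nlinarith
          _ = ((k:ℝ) - (m:ℝ) + 1) * (((k:ℝ)/2) ^ q / n) := by ring
  · -- upper bound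
    rw [hΨ]
    set k : ℕ := ⌈(n:ℝ) ^ (1/D)⌉₊ with hkdef
    have hk1 : 1 ≤ k := Nat.one_le_iff_ne_zero.mpr (by
      intro h
      have := Nat.ceil_eq_zero.mp h
      linarith)
    have hkx : (n:ℝ) ^ (1/D) ≤ (k:ℝ) := Nat.le_ceil _
    have hkx2 : (k:ℝ) ≤ 2 * (n:ℝ) ^ (1/D) := by
      have := Nat.ceil_lt_add_one (le_of_lt hx0)
      have h2 := this.le
      calc (k:ℝ) ≤ (n:ℝ) ^ (1/D) + 1 := h2
        _ ≤ 2 * (n:ℝ) ^ (1/D) := by linarith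
    have hkR : (0:ℝ) < (k:ℝ) := by exact_mod_cast hk1
    refine le_trans (ciInf_le hbdd k) (max_le ?_ ?_)
    · rw [hB k (by omega)]
      have h1 : (k:ℝ) ^ (-(2*(p-s))) ≤ ((n:ℝ) ^ (1/D)) ^ (-(2*(p-s))) :=
        Real.rpow_le_rpow_of_nonpos hx0 hkx (by linarith)
      rw [hxpow] at h1
      refine h1.trans ?_
      have hC1 : (1:ℝ) ≤ 3 * 2 ^ (q+1) := by
        have : (1:ℝ) ≤ 2 ^ (q+1) := Real.one_le_rpow one_le_two hq1.le
        linarith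
      nlinarith [Real.rpow_pos_of_pos ht0 (-r)]
    · have hup : ∀ j ∈ Finset.Icc (-(k:ℤ)) (k:ℤ),
          ω j / (n * α j) ≤ (k:ℝ) ^ q / n := by
        intro j hj
        rw [Finset.mem_Icc] at hj
        rcases eq_or_ne j 0 with h | h
        · rw [h, hterm0]
          gcongr
          exact Real.one_le_rpow (by exact_mod_cast hk1) hq0
        · rw [hterm j h]
          gcongr
          have : |j| ≤ (k:ℤ) := abs_le.mpr ⟨hj.1, hj.2⟩
          calc |(j:ℝ)| = ((|j| : ℤ) : ℝ) := by push_cast; rfl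
            _ ≤ ((k:ℤ):ℝ) := by exact_mod_cast this
      have hsum : ∑ j ∈ Finset.Icc (-(k:ℤ)) (k:ℤ), ω j / (n * α j) ≤
          (Finset.Icc (-(k:ℤ)) (k:ℤ)).card • ((k:ℝ) ^ q / n) :=
        Finset.sum_le_card_nsmul _ _ _ hup
      have hcard : ((Finset.Icc (-(k:ℤ)) (k:ℤ)).card : ℝ) = 2 * k + 1 := by
        rw [Int.card_Icc]
        have : ((k:ℤ) + 1 - (-(k:ℤ))).toNat = 2 * k + 1 := by omega
        rw [this]
        push_cast
        ring
      rw [nsmul_eq_mul, hcard] at hsum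
      refine hsum.trans ?_
      have hkq : (k:ℝ) ^ (q+1) ≤ 2 ^ (q+1) * (n:ℝ) ^ ((q+1)/D) := by
        rw [← hxr, ← Real.mul_rpow (by norm_num) hx0.le]
        exact Real.rpow_le_rpow hkR.le hkx2 hq1.le
      have hsplit : (k:ℝ) ^ (q+1) = (k:ℝ) ^ q * (k:ℝ) := by
        rw [← Real.rpow_add_one hkR.ne']
      have hkq1 : (1:ℝ) ≤ (k:ℝ) ^ q := Real.one_le_rpow (by exact_mod_cast hk1) hq0
      have hk1R : (1:ℝ) ≤ (k:ℝ) := by exact_mod_cast hk1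
      calc (2 * (k:ℝ) + 1) * ((k:ℝ) ^ q / n) ≤ (3 * (k:ℝ)) * ((k:ℝ) ^ q / n) := by
            apply mul_le_mul_of_nonneg_right (by linarith) (by positivity)
        _ = 3 * (k:ℝ) ^ (q+1) / n := by rw [hsplit]; ring
        _ ≤ 3 * (2 ^ (q+1) * (n:ℝ) ^ ((q+1)/D)) / n := by gcongr
        _ = 3 * 2 ^ (q+1) * (n:ℝ) ^ (-r) := by
            rw [← hxn]
            ring
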